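/- Let r₀ > 0 and m₀ > 0 with χ₀ := 2m₀/r₀ < 1, and let P₀ ≥ 0. Let m : [0,r₀] → ℝ be continuous with m(r₀) = m₀, 0 ≤ 2m(r) < r and m(r) ≥ m₀ r³/r₀³ for all r ∈ (0,r₀]. Let ζ : [0,r₀] → ℝ be continuous, positive on (0,r₀], differentiable on (0,r₀], with ζ(0) ≥ 0 and ζ′(r₀)/ζ(r₀) = (m₀+4πr₀³P₀)/(r₀(r₀−2m₀)). Suppose that for every r ∈ (0,r₀), (1/r)·√(1−2m(r)/r)·ζ′(r) ≥ (1/r₀)·√(1−χ₀)·ζ′(r₀). Then P₀ ≤ (1/(4πr₀²))·(√(1−χ₀) + 1 − (3/2)χ₀). -/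

import Mathlib

open Real Set

set_option maxHeartbeats 1000000 in
theorem interior_pressure_upper_bound
    (r₀ m₀ χ₀ P₀ : ℝ) (hr₀ : 0 < r₀) (hm₀ : 0 < m₀)
    (hχ₀ : χ₀ = 2 * m₀ / r₀) (hχ₀lt : χ₀ < 1) (hP₀ : 0 ≤ P₀)
    (m ζ ζ' : ℝ → ℝ)
    (hm_cont : ContinuousOn m (Icc 0 r₀))
    (hmr₀ : m r₀ = m₀)
    (hm_bound : ∀ r ∈ Ioc (0:ℝ) r₀, 0 ≤ 2 * m r ∧ 2 * m r < r)
    (hm_ge : ∀ r ∈ Ioc (0:ℝ) r₀, m r ≥ m₀ * r ^ 3 / r₀ ^ 3)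
    (hζ_cont : ContinuousOn ζ (Icc 0 r₀))
    (hζ_pos : ∀ r ∈ Ioc (0:ℝ) r₀, 0 < ζ r)
    (hζ_deriv : ∀ r ∈ Ioc (0:ℝ) r₀, HasDerivAt ζ (ζ' r) r)
    (hζ0 : 0 ≤ ζ 0)
    (hgrav : ζ' r₀ / ζ r₀ = (m₀ + 4 * π * r₀ ^ 3 * P₀) / (r₀ * (r₀ - 2 * m₀)))
    (hineq : ∀ r ∈ Ioo (0:ℝ) r₀,
      (1 / r) * Real.sqrt (1 - 2 * m r / r) * ζ' r ≥
        (1 / r₀) * Real.sqrt (1 - χ₀) * ζ' r₀) :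
    P₀ ≤ (1 / (4 * π * r₀ ^ 2)) * (Real.sqrt (1 - χ₀) + 1 - (3 / 2) * χ₀) := by
  -- basic positivity facts
  have hχpos : 0 < χ₀ := by rw [hχ₀]; positivity
  have h2m : 2 * m₀ < r₀ := by
    have : χ₀ * r₀ < 1 * r₀ := by exact mul_lt_mul_of_pos_right hχ₀lt hr₀
    rw [hχ₀] at this; rw [div_mul_cancel₀] at this <;> [linarith; exact hr₀.ne']
  have hχr : χ₀ * r₀ = 2 * m₀ := by rw [hχ₀]; field_simp
  set s : ℝ := Real.sqrt (1 - χ₀) with hs_def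
  have hs2 : s ^ 2 = 1 - χ₀ := Real.sq_sqrt (by linarith)
  have hspos : 0 < s := Real.sqrt_pos.mpr (by linarith)
  have hslt : s < 1 := by nlinarith [hs2, hspos]
  have hZ : 0 < ζ r₀ := hζ_pos r₀ ⟨hr₀, le_refl _⟩
  have hden : 0 < r₀ * (r₀ - 2 * m₀) := by nlinarith
  have hnum : 0 < m₀ + 4 * π * r₀ ^ 3 * P₀ := by
    have := Real.pi_pos; positivity
  have hG : 0 < ζ' r₀ := by
    have h1 : ζ' r₀ = ζ r₀ * ((m₀ + 4 * π * r₀ ^ 3 * P₀) / (r₀ * (r₀ - 2 * m₀))) := by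
      rw [← hgrav]; field_simp
    rw [h1]; positivity
  set G : ℝ := ζ' r₀ with hG_def
  set c : ℝ := s * G with hc_def
  have hc : 0 < c := mul_pos hspos hG
  -- auxiliary function F and h
  set F : ℝ → ℝ := fun r => -(r₀ / χ₀) * Real.sqrt (1 - χ₀ * r ^ 2 / r₀ ^ 2) with hF_def
  set h : ℝ → ℝ := fun r => ζ r - c * F r with hh_def
  -- F r₀ and F 0
  have hFr₀ : F r₀ = -(r₀ / χ₀) * s := by
    simp only [hF_def]
    congr 1
    rw [hs_def]
    congr 1
    field_simp
  have hF0 : F 0 = -(r₀ / χ₀) := by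
    simp only [hF_def]
    norm_num
  -- u positive on Ioo
  have hu_pos : ∀ x ∈ Ioo (0:ℝ) r₀, 0 < 1 - χ₀ * x ^ 2 / r₀ ^ 2 := by
    intro x hx
    have hx2 : x ^ 2 < r₀ ^ 2 := by nlinarith [hx.1, hx.2]
    have : χ₀ * x ^ 2 / r₀ ^ 2 < χ₀ := by
      rw [div_lt_iff₀ (by positivity)]
      nlinarith
    linarith
  -- derivative of F at interior points
  have hF_deriv : ∀ x ∈ Ioo (0:ℝ) r₀,
      HasDerivAt F (x / (r₀ * Real.sqrt (1 - χ₀ * x ^ 2 / r₀ ^ 2))) x := by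
    intro x hx
    have hupos := hu_pos x hx
    have hu : HasDerivAt (fun r : ℝ => 1 - χ₀ * r ^ 2 / r₀ ^ 2)
        (-(χ₀ * (2 * x) / r₀ ^ 2)) x := by
      have h1 : HasDerivAt (fun r : ℝ => r ^ 2) (2 * x) x := by
        simpa using hasDerivAt_pow 2 x
      have h2 := ((h1.const_mul χ₀).div_const (r₀ ^ 2)).const_sub 1
      convert h2 using 1
    have hsq := hu.sqrt hupos.ne'
    have h3 := hsq.const_mul (-(r₀ / χ₀))
    refine h3.congr_deriv ?_
    have hsqpos : 0 < Real.sqrt (1 - χ₀ * x ^ 2 / r₀ ^ 2) := Real.sqrt_pos.mpr hupos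
    set S : ℝ := Real.sqrt (1 - χ₀ * x ^ 2 / r₀ ^ 2) with hS_def
    have hχne := hχpos.ne'
    have hrne := hr₀.ne'
    have hSne := hsqpos.ne'
    field_simp
  -- h is monotone on Icc 0 r₀
  have hF_cont : ContinuousOn F (Icc 0 r₀) := by
    apply Continuous.continuousOn
    apply Continuous.mul continuous_const
    exact Real.continuous_sqrt.comp
      (continuous_const.sub ((continuous_const.mul (continuous_pow 2)).div_const (r₀ ^ 2)))
  have hmono : MonotoneOn h (Icc 0 r₀) := by
    apply monotoneOn_of_deriv_nonneg (convex_Icc 0 r₀)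
    · exact hζ_cont.sub (continuousOn_const.mul hF_cont)
    · intro x hx
      rw [interior_Icc] at hx
      exact ((hζ_deriv x ⟨hx.1, hx.2.le⟩).sub
        ((hF_deriv x hx).const_mul c)).differentiableAt.differentiableWithinAt
    · intro x hx
      rw [interior_Icc] at hx
      have hd := (hζ_deriv x ⟨hx.1, hx.2.le⟩).sub ((hF_deriv x hx).const_mul c)
      rw [show deriv h x = _ from hd.deriv]
      -- need: 0 ≤ ζ' x - c * (x / (r₀ * √u))
      have hupos := hu_pos x hx
      have hsu : 0 < Real.sqrt (1 - χ₀ * x ^ 2 / r₀ ^ 2) := Real.sqrt_pos.mpr hupos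
      have hwpos : 0 < 1 - 2 * m x / x := by
        have hb := (hm_bound x ⟨hx.1, hx.2.le⟩).2
        rw [sub_pos, div_lt_one hx.1]
        exact hb
      have hsw : 0 < Real.sqrt (1 - 2 * m x / x) := Real.sqrt_pos.mpr hwpos
      set w : ℝ := Real.sqrt (1 - 2 * m x / x) with hw_def
      -- w ≤ √u
      have hwle : w ≤ Real.sqrt (1 - χ₀ * x ^ 2 / r₀ ^ 2) := by
        apply Real.sqrt_le_sqrt
        have hmge := hm_ge x ⟨hx.1, hx.2.le⟩
        have : χ₀ * x ^ 2 / r₀ ^ 2 ≤ 2 * m x / x := by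
          rw [div_le_div_iff₀ (by positivity) hx.1]
          have h1 : m₀ * x ^ 3 / r₀ ^ 3 ≤ m x := hmge
          rw [div_le_iff₀ (by positivity)] at h1
          have h2 : χ₀ * x ^ 2 * x * r₀ = 2 * m₀ * x ^ 3 := by
            rw [← hχr]; ring
          have h3 : χ₀ * x ^ 2 * x * r₀ ≤ 2 * m x * r₀ ^ 2 * r₀ := by
            calc χ₀ * x ^ 2 * x * r₀ = 2 * (m₀ * x ^ 3) := by linarith [h2]
              _ ≤ 2 * (m x * r₀ ^ 3) := by linarith [h1]
              _ = 2 * m x * r₀ ^ 2 * r₀ := by ring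
          exact le_of_mul_le_mul_right h3 hr₀
        linarith
      have hkey := hineq x hx
      -- from hkey : (1/x) * w * ζ' x ≥ (1/r₀) * s * G
      have h1 : (1 / r₀) * s * G * x ≤ w * ζ' x := by
        have hh := mul_le_mul_of_nonneg_right hkey hx.1.le
        calc (1 / r₀) * s * G * x ≤ (1 / x) * w * ζ' x * x := hh
          _ = w * ζ' x * (x * (1 / x)) := by ring
          _ = w * ζ' x := by rw [mul_one_div, div_self hx.1.ne', mul_one]
      have hζx : 0 < ζ' x := by
        have hx0 : 0 < x := hx.1
        have hAx : 0 < (1 / r₀) * s * G * x := by positivity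
        nlinarith
      have h2 : (1 / r₀) * s * G * x ≤ Real.sqrt (1 - χ₀ * x ^ 2 / r₀ ^ 2) * ζ' x := by
        calc (1 / r₀) * s * G * x ≤ w * ζ' x := h1
          _ ≤ Real.sqrt (1 - χ₀ * x ^ 2 / r₀ ^ 2) * ζ' x :=
            mul_le_mul_of_nonneg_right hwle hζx.le
      have h3 : c * (x / (r₀ * Real.sqrt (1 - χ₀ * x ^ 2 / r₀ ^ 2))) ≤ ζ' x := by
        rw [mul_div_assoc', div_le_iff₀ (by positivity)]
        have h5 := mul_le_mul_of_nonneg_right h2 hr₀.le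
        calc c * x = (1 / r₀) * s * G * x * r₀ := by
              rw [hc_def]; field_simp
          _ ≤ Real.sqrt (1 - χ₀ * x ^ 2 / r₀ ^ 2) * ζ' x * r₀ := h5
          _ = ζ' x * (r₀ * Real.sqrt (1 - χ₀ * x ^ 2 / r₀ ^ 2)) := by ring
      linarith
  -- apply monotonicity
  have hmn := hmono (left_mem_Icc.mpr hr₀.le) (right_mem_Icc.mpr hr₀.le) hr₀.le
  simp only [hh_def, hFr₀, hF0] at hmn
  -- ζ r₀ ≥ c * (r₀/χ₀) * (1 - s)
  have hkey2 : c * (r₀ / χ₀) * (1 - s) ≤ ζ r₀ := by nlinarith [hζ0]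
  -- main equation from hgrav
  have hE1 : ζ' r₀ * (r₀ * (r₀ - 2 * m₀)) = (m₀ + 4 * π * r₀ ^ 3 * P₀) * ζ r₀ := by
    rw [div_eq_div_iff hZ.ne' hden.ne'] at hgrav
    linarith
  -- rewrite: r₀ - 2m₀ = r₀ s², m₀ = χ₀ r₀ / 2
  have hE2 : G * r₀ ^ 2 * s ^ 2 = (χ₀ * r₀ / 2 + 4 * π * r₀ ^ 3 * P₀) * ζ r₀ := by
    have h1 : r₀ - 2 * m₀ = r₀ * s ^ 2 := by rw [hs2]; nlinarith [hχr]
    have h2 : m₀ = χ₀ * r₀ / 2 := by linarith [hχr]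
    rw [hG_def]
    calc ζ' r₀ * r₀ ^ 2 * s ^ 2 = ζ' r₀ * (r₀ * (r₀ * s ^ 2)) := by ring
      _ = ζ' r₀ * (r₀ * (r₀ - 2 * m₀)) := by rw [h1]
      _ = (m₀ + 4 * π * r₀ ^ 3 * P₀) * ζ r₀ := hE1
      _ = (χ₀ * r₀ / 2 + 4 * π * r₀ ^ 3 * P₀) * ζ r₀ := by rw [h2]
  -- key2 scaled: multiply by χ₀ > 0 form: s*G*r₀*(1-s) ≤ ζ r₀ * χ₀
  have hkey3 : s * G * r₀ * (1 - s) ≤ ζ r₀ * χ₀ := by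
    have := mul_le_mul_of_nonneg_right hkey2 hχpos.le
    calc s * G * r₀ * (1 - s) = c * (r₀ / χ₀) * (1 - s) * χ₀ := by
          rw [hc_def]; field_simp
      _ ≤ ζ r₀ * χ₀ := this
  -- derive Q(1-s) ≤ ...
  set Q : ℝ := 4 * π * r₀ ^ 2 * P₀ with hQ_def
  have hQnn : 0 ≤ Q := by have := Real.pi_pos; positivity
  have hE3 : G * r₀ * s ^ 2 = (χ₀ / 2 + Q) * ζ r₀ := by
    have : G * r₀ ^ 2 * s ^ 2 = ((χ₀ / 2 + Q) * ζ r₀) * r₀ := by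
      rw [hE2, hQ_def]; ring
    have hr := hr₀.ne'
    field_simp at this ⊢
    nlinarith [this]
  have hstep1 : ((χ₀ / 2 + Q) * (1 - s)) * ζ r₀ ≤ (χ₀ * s) * ζ r₀ := by
    have h4 := mul_le_mul_of_nonneg_left hkey3 hspos.le
    calc ((χ₀ / 2 + Q) * (1 - s)) * ζ r₀ = (G * r₀ * s ^ 2) * (1 - s) := by
          rw [hE3]; ring
      _ = s * (s * G * r₀ * (1 - s)) := by ring
      _ ≤ s * (ζ r₀ * χ₀) := h4
      _ = (χ₀ * s) * ζ r₀ := by ring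
  have hstep2 : (χ₀ / 2 + Q) * (1 - s) ≤ χ₀ * s :=
    le_of_mul_le_mul_right (by nlinarith [hstep1]) hZ
  have hQbound : Q ≤ s + 1 - (3 / 2) * χ₀ := by nlinarith [hstep2, hs2, hslt, hspos]
  -- conclude
  have h4pos : 0 < 4 * π * r₀ ^ 2 := by have := Real.pi_pos; positivity
  rw [← sub_nonneg]
  have : (1 / (4 * π * r₀ ^ 2)) * (s + 1 - (3 / 2) * χ₀) - P₀
      = ((s + 1 - (3 / 2) * χ₀) - Q) / (4 * π * r₀ ^ 2) := by
    rw [hQ_def]; field_simp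
  rw [this]
  apply div_nonneg (by linarith) h4pos.le
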